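/- arXiv:1602.00592 — 2 statements merged into one kernel-verified Lean document; each statement's English description precedes it below -/
import Mathlib

section
/- Let B be a closed ball (with respect to the dual norm) in the dual space M = C_b(ℝ^d; ℝ^d)'. Then B, equipped with the metric d(ξ,ξ') = sup{(ξ-ξ')(θ) : ‖θ‖_∞ + Lip(θ) ≤ 1}, is a complete metric space. -/
open BoundedContinuousFunction MeasureTheory Set Filter
open scoped NNReal

noncomputable section

/-- `ℝ^d`. -/
abbrev E (d : ℕ) := EuclideanSpace ℝ (Fin d)
/-- The Banach space `C_b(ℝ^d; ℝ^d)` of bounded continuous vector fields. -/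
abbrev VF (d : ℕ) := E d →ᵇ E d
/-- The space of 1-currents `M = C_b(ℝ^d;ℝ^d)'` with its dual norm `‖·‖ = |·|_M`. -/
abbrev Cur (d : ℕ) := StrongDual ℝ (VF d)

def blSet {d : ℕ} (ξ : Cur d) : Set ℝ :=
  { r : ℝ | ∃ θ : VF d, ∃ L : ℝ≥0, LipschitzWith L θ ∧ ‖θ‖ + (L : ℝ) ≤ 1 ∧ r = ξ θ }

lemma blSet_bddAbove {d : ℕ} (ξ : Cur d) : BddAbove (blSet ξ) := by
  refine ⟨‖ξ‖, fun r hr => ?_⟩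
  obtain ⟨θ, L, hL, hle, rfl⟩ := hr
  have h1 : ‖θ‖ ≤ 1 := le_trans (le_add_of_nonneg_right L.coe_nonneg) hle
  calc ξ θ ≤ ‖ξ θ‖ := Real.le_norm_self _
    _ ≤ ‖ξ‖ * ‖θ‖ := ξ.le_opNorm θ
    _ ≤ ‖ξ‖ * 1 := by gcongr
    _ = ‖ξ‖ := mul_one _

lemma zero_mem_blSet {d : ℕ} (ξ : Cur d) : (0:ℝ) ∈ blSet ξ := by
  refine ⟨0, 0, ?_, by simp, by simp⟩
  simpa using (LipschitzWith.const (0 : E d)).weaken le_rfl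

def blNorm' {d : ℕ} (ξ : Cur d) : ℝ := sSup (blSet ξ)

lemma blNorm'_nonneg {d : ℕ} (ξ : Cur d) : 0 ≤ blNorm' ξ :=
  le_csSup (blSet_bddAbove ξ) (zero_mem_blSet ξ)

lemma apply_le_blNorm' {d : ℕ} (ξ : Cur d) (θ : VF d) (L : ℝ≥0)
    (hL : LipschitzWith L θ) : ξ θ ≤ blNorm' ξ * (‖θ‖ + L) := by
  set C : ℝ := ‖θ‖ + L with hCdef
  have hC : 0 ≤ C := add_nonneg (norm_nonneg _) L.coe_nonneg
  rcases eq_or_lt_of_le hC with h0 | h0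
  · have hθ : ‖θ‖ = 0 := by
      have := L.coe_nonneg; have := norm_nonneg θ; nlinarith [h0.symm]
    have hz : θ = 0 := norm_eq_zero.mp hθ
    rw [hz, map_zero]
    exact mul_nonneg (blNorm'_nonneg ξ) hC
  · have hcoe : ⇑(C⁻¹ • θ) = fun x => C⁻¹ • θ x := by
      ext x; simp
    have hlip : LipschitzWith (‖(C⁻¹ : ℝ)‖₊ * L) ⇑(C⁻¹ • θ) := by
      rw [hcoe]; exact (lipschitzWith_smul (C⁻¹ : ℝ)).comp hL
    have hid : ((‖(C⁻¹ : ℝ)‖₊ * L : ℝ≥0) : ℝ) = C⁻¹ * L := by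
      push_cast [Real.norm_eq_abs]
      rw [abs_of_nonneg (inv_nonneg.mpr hC)]
    have hnorm : ‖C⁻¹ • θ‖ = C⁻¹ * ‖θ‖ := by
      rw [norm_smul C⁻¹ θ, Real.norm_eq_abs, abs_of_nonneg (inv_nonneg.mpr hC)]
    have hmem : (C⁻¹ * ξ θ) ∈ blSet ξ := by
      refine ⟨C⁻¹ • θ, ‖(C⁻¹ : ℝ)‖₊ * L, hlip, ?_, ?_⟩
      · rw [hnorm, hid, ← mul_add, ← hCdef, inv_mul_cancel₀ h0.ne']
      · rw [_root_.map_smul, smul_eq_mul]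
    have hle : C⁻¹ * ξ θ ≤ blNorm' ξ := le_csSup (blSet_bddAbove ξ) hmem
    calc ξ θ = C * (C⁻¹ * ξ θ) := by field_simp
      _ ≤ C * blNorm' ξ := by gcongr
      _ = blNorm' ξ * C := mul_comm _ _

lemma abs_apply_le_blNorm' {d : ℕ} (ξ : Cur d) (θ : VF d) (L : ℝ≥0)
    (hL : LipschitzWith L θ) : |ξ θ| ≤ blNorm' ξ * (‖θ‖ + L) := by
  rw [abs_le]
  constructor
  · have h := apply_le_blNorm' ξ (-θ) L (by simpa using hL.neg)
    rw [map_neg, norm_neg] at h; linarith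
  · exact apply_le_blNorm' ξ θ L hL

/-- The bounded-Lipschitz (weak) norm
`‖ξ‖ = sup { ξ(θ) : ‖θ‖_∞ + Lip(θ) ≤ 1 }` on 1-currents. -/
def blNorm {d : ℕ} (ξ : Cur d) : ℝ :=
  sSup { r : ℝ | ∃ θ : VF d, ∃ L : ℝ≥0, LipschitzWith L θ ∧ ‖θ‖ + (L : ℝ) ≤ 1 ∧ r = ξ θ }

lemma blNorm_eq {d : ℕ} (ξ : Cur d) : blNorm ξ = blNorm' ξ := rfl

def lipSub (d : ℕ) : Subspace ℝ (VF d) where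
  carrier := {θ : VF d | ∃ L : ℝ≥0, LipschitzWith L ⇑θ}
  zero_mem' := ⟨0, by simpa using (LipschitzWith.const (0 : E d)).weaken le_rfl⟩
  add_mem' := by
    rintro a b ⟨L1, h1⟩ ⟨L2, h2⟩
    exact ⟨L1 + L2, h1.add h2⟩
  smul_mem' := by
    rintro r a ⟨L, h⟩
    exact ⟨‖r‖₊ * L, (lipschitzWith_smul r).comp h⟩


set_option maxHeartbeats 1000000 in
/-- A closed ball (w.r.t. the dual norm) in `M = C_b(ℝ^d;ℝ^d)'`,
equipped with the metric `d(ξ,ξ') = ‖ξ - ξ'‖` given by the bounded-Lipschitz norm,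
is a complete metric space: every Cauchy sequence in the ball converges, in the
bounded-Lipschitz distance, to an element of the ball. -/
theorem closedBall_complete_blNorm {d : ℕ} (c : Cur d) (R : ℝ) (u : ℕ → Cur d)
    (hu : ∀ n, ‖u n - c‖ ≤ R)
    (hcauchy : ∀ ε > 0, ∃ N : ℕ, ∀ m ≥ N, ∀ n ≥ N, blNorm (u m - u n) < ε) :
    ∃ ξ : Cur d, ‖ξ - c‖ ≤ R ∧
      Tendsto (fun n => blNorm (u n - ξ)) atTop (nhds 0) := by
  simp only [blNorm_eq] at hcauchy ⊢
  have hR : 0 ≤ R := le_trans (norm_nonneg (u 0 - c)) (hu 0)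
  -- convergence of evaluations at Lipschitz test fields
  have hconv : ∀ θ : VF d, ∀ L : ℝ≥0, LipschitzWith L ⇑θ →
      ∃ l : ℝ, Tendsto (fun n => (u n - c) θ) atTop (nhds l) := by
    intro θ L hL
    apply cauchySeq_tendsto_of_complete
    rw [Metric.cauchySeq_iff]
    intro ε hε
    set C : ℝ := ‖θ‖ + L with hCdef
    have hC : 0 ≤ C := add_nonneg (norm_nonneg _) L.coe_nonneg
    obtain ⟨N, hN⟩ := hcauchy (ε / (C + 1)) (by positivity)
    refine ⟨N, fun m hm n hn => ?_⟩
    have h1 : dist ((u m - c) θ) ((u n - c) θ) = |(u m - u n) θ| := by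
      rw [Real.dist_eq]
      congr 1
      simp only [ContinuousLinearMap.sub_apply]
      ring
    rw [h1]
    calc |(u m - u n) θ| ≤ blNorm' (u m - u n) * C := abs_apply_le_blNorm' _ θ L hL
      _ ≤ (ε / (C + 1)) * C := by
          have := (hN m hm n hn).le
          gcongr
      _ < ε := by
          rw [div_mul_eq_mul_div, div_lt_iff₀ (by positivity)]
          nlinarith
  -- the limiting functional on Lipschitz fields
  set g : VF d → ℝ := fun θ => limUnder atTop (fun n => (u n - c) θ) with hgdef
  have hg : ∀ θ : VF d, ∀ L : ℝ≥0, LipschitzWith L ⇑θ →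
      Tendsto (fun n => (u n - c) θ) atTop (nhds (g θ)) := by
    intro θ L hL
    obtain ⟨l, hl⟩ := hconv θ L hL
    rwa [show g θ = l from hl.limUnder_eq]
  -- as a linear map on the Lipschitz subspace
  set flin : lipSub d →ₗ[ℝ] ℝ :=
    { toFun := fun θ => g θ.1
      map_add' := by
        rintro ⟨a, La, ha⟩ ⟨b, Lb, hb⟩
        obtain ⟨L1, h1⟩ : ∃ L : ℝ≥0, LipschitzWith L ⇑(a + b) := (lipSub d).add_mem ⟨La, ha⟩ ⟨Lb, hb⟩
        refine tendsto_nhds_unique (hg (a + b) L1 h1) ?_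
        have := (hg a La ha).add (hg b Lb hb)
        simpa [map_add] using this
      map_smul' := by
        rintro r ⟨a, La, ha⟩
        obtain ⟨L1, h1⟩ : ∃ L : ℝ≥0, LipschitzWith L ⇑(r • a) := (lipSub d).smul_mem r ⟨La, ha⟩
        refine tendsto_nhds_unique (hg (r • a) L1 h1) ?_
        have := (hg a La ha).const_mul r
        simpa [_root_.map_smul, smul_eq_mul] using this } with hflin
  have hfbound : ∀ θ : lipSub d, ‖flin θ‖ ≤ R * ‖θ‖ := by
    rintro ⟨a, La, ha⟩
    have h1 : Tendsto (fun n => |(u n - c) a|) atTop (nhds |g a|) := (hg a La ha).abs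
    have h2 : |g a| ≤ R * ‖a‖ := by
      refine le_of_tendsto h1 (Eventually.of_forall fun n => ?_)
      calc |(u n - c) a| = ‖(u n - c) a‖ := rfl
        _ ≤ ‖u n - c‖ * ‖a‖ := (u n - c).le_opNorm a
        _ ≤ R * ‖a‖ := by gcongr; exact hu n
    exact (Real.norm_eq_abs _).trans_le h2
  set F := @LinearMap.mkContinuous ℝ ℝ (lipSub d) ℝ _ _ _ _ _ _ (RingHom.id ℝ) flin R hfbound with hF
  obtain ⟨η, hext, hnorm⟩ := exists_extension_norm_eq (lipSub d) F
  have hηnorm : ‖η‖ ≤ R := by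
    rw [hnorm]
    exact ContinuousLinearMap.opNorm_le_bound _ hR fun x => hfbound x
  refine ⟨c + η, by convert hηnorm using 2; exact add_sub_cancel_left c η, ?_⟩
  -- η agrees with g on Lipschitz fields
  have hηg : ∀ θ : VF d, ∀ L : ℝ≥0, LipschitzWith L ⇑θ → η θ = g θ := by
    intro θ L hL
    exact hext ⟨θ, L, hL⟩
  rw [Metric.tendsto_atTop]
  intro ε hε
  obtain ⟨N, hN⟩ := hcauchy (ε / 2) (by positivity)
  refine ⟨N, fun n hn => ?_⟩
  have hkey : blNorm' (u n - (c + η)) ≤ ε / 2 := by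
    apply csSup_le ⟨0, zero_mem_blSet _⟩
    rintro r ⟨θ, L, hL, hle, rfl⟩
    have heval : (u n - (c + η)) θ = (u n - c) θ - η θ := by
      simp only [ContinuousLinearMap.sub_apply, ContinuousLinearMap.add_apply]
      ring
    rw [heval, hηg θ L hL]
    have htd : Tendsto (fun m => (u n - c) θ - (u m - c) θ) atTop
        (nhds ((u n - c) θ - g θ)) := tendsto_const_nhds.sub (hg θ L hL)
    refine le_of_tendsto htd ?_
    filter_upwards [eventually_ge_atTop N] with m hm
    have hmem : (u n - u m) θ ∈ blSet (u n - u m) := ⟨θ, L, hL, hle, rfl⟩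
    have : (u n - u m) θ ≤ blNorm' (u n - u m) := le_csSup (blSet_bddAbove _) hmem
    have h3 : (u n - c) θ - (u m - c) θ = (u n - u m) θ := by
      simp only [ContinuousLinearMap.sub_apply]; ring
    rw [h3]
    exact this.trans (hN n hn m hm).le
  have hnn : 0 ≤ blNorm' (u n - (c + η)) := blNorm'_nonneg _
  rw [Real.dist_eq, sub_zero, abs_of_nonneg hnn]
  linarith
end
end

section
/- Let ξ be a (deterministic) bounded linear functional on C_b(ℝ³,ℝ³) with |ξ|_M < ∞ and, for each N, let (γ^{1,N},…,γ^{N,N}) be an exchangeable family of random 1-currents with associated empirical current ξ^N = (1/N)Σ_j γ^{j,N}. Assume |γ^{i,N}(θ)| ≤ C almost surely uniformly in i,N, for every θ ∈ C_b(ℝ³,ℝ³), and E[|ξ^N(θ) − ξ(θ)|] → 0 as N → ∞ for each θ. Then for every r ∈ ℕ and test functions θ₁,…,θ_r ∈ C_b(ℝ³,ℝ³): lim_{N→∞} E[γ^{1,N}(θ₁)⋯γ^{r,N}(θ_r)] = Π_{i=1}^r ξ(θ_i) (propagation of chaos). -/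
open BoundedContinuousFunction MeasureTheory Set Filter
open scoped NNReal

noncomputable section

/-- Propagation of chaos. Let `ξ ∈ M = C_b(ℝ³,ℝ³)'` and, for every
`N`, let `(γ^{1,N},…,γ^{N,N})` be an exchangeable family of random 1-currents
(exchangeability expressed through equality of all joint moments under relabelling of
distinct indices), with empirical current `ξ^N = (1/N) Σ_{j<N} γ^{j,N}`. Assume
`|γ^{i,N}(θ)| ≤ C` a.s. uniformly in `i,N` for every `θ`, and
`E[|ξ^N(θ) − ξ(θ)|] → 0` for every `θ`. Then for every `r` and test fields
`θ₁,…,θ_r`, `E[γ^{1,N}(θ₁)⋯γ^{r,N}(θ_r)] → ∏ᵢ ξ(θᵢ)`. -/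
theorem propagation_of_chaos {Ω : Type*} [MeasurableSpace Ω] (P : Measure Ω)
    [IsProbabilityMeasure P]
    (γ : ℕ → ℕ → Ω → Cur 3) (ξ : Cur 3) (ξN : ℕ → Ω → Cur 3)
    (hmeas : ∀ N i (θ : VF 3), AEStronglyMeasurable (fun ω => γ N i ω θ) P)
    (hexch : ∀ (N r : ℕ) (θ : Fin r → VF 3) (idx idx' : Fin r → ℕ),
      Function.Injective idx → Function.Injective idx' →
      (∀ k, idx k < N) → (∀ k, idx' k < N) →
      ∫ ω, ∏ k : Fin r, γ N (idx k) ω (θ k) ∂P =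
        ∫ ω, ∏ k : Fin r, γ N (idx' k) ω (θ k) ∂P)
    (hξN : ∀ N ω, ξN N ω = (N : ℝ)⁻¹ • ∑ j ∈ Finset.range N, γ N j ω)
    (hbound : ∀ θ : VF 3, ∃ C : ℝ, ∀ N i, i < N → ∀ᵐ ω ∂P, |γ N i ω θ| ≤ C)
    (hconv : ∀ θ : VF 3,
      Tendsto (fun N => ∫ ω, |ξN N ω θ - ξ θ| ∂P) atTop (nhds 0))
    (r : ℕ) (θ : Fin r → VF 3) :
    Tendsto (fun N => ∫ ω, ∏ k : Fin r, γ N k ω (θ k) ∂P) atTop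
      (nhds (∏ k : Fin r, ξ (θ k))) := by
  classical
  -- choose uniform a.s. bounds
  choose C hC using hbound
  have hC0 : ∀ θ : VF 3, 0 ≤ C θ := by
    intro θ
    obtain ⟨ω, hω⟩ := (hC θ 1 0 one_pos).exists
    exact (abs_nonneg _).trans hω
  -- measurability, bound and integrability of products
  have hmeasP : ∀ (N m : ℕ) (σ : Fin m → ℕ) (φ : Fin m → VF 3),
      AEStronglyMeasurable (fun ω => ∏ k, γ N (σ k) ω (φ k)) P := fun N m σ φ =>
    Finset.aestronglyMeasurable_fun_prod _ fun k _ => hmeas N (σ k) (φ k)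
  have hbdP : ∀ (N m : ℕ) (σ : Fin m → ℕ), (∀ k, σ k < N) → ∀ (φ : Fin m → VF 3),
      ∀ᵐ ω ∂P, |∏ k, γ N (σ k) ω (φ k)| ≤ ∏ k, C (φ k) := by
    intro N m σ hσ φ
    have h := ae_all_iff.2 (fun k : Fin m => hC (φ k) N (σ k) (hσ k))
    filter_upwards [h] with ω hω
    calc |∏ k, γ N (σ k) ω (φ k)| = ∏ k, |γ N (σ k) ω (φ k)| := by
          rw [Finset.abs_prod]
      _ ≤ ∏ k, C (φ k) := Finset.prod_le_prod (fun k _ => abs_nonneg _) (fun k _ => hω k)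
  have hintP : ∀ (N m : ℕ) (σ : Fin m → ℕ), (∀ k, σ k < N) → ∀ (φ : Fin m → VF 3),
      Integrable (fun ω => ∏ k, γ N (σ k) ω (φ k)) P := by
    intro N m σ hσ φ
    refine Integrable.mono' (integrable_const (∏ k, C (φ k))) (hmeasP N m σ φ) ?_
    filter_upwards [hbdP N m σ hσ φ] with ω hω using by simpa only [Real.norm_eq_abs] using hω
  revert θ
  induction r with
  | zero =>
    intro θ
    simpa using tendsto_const_nhds
  | succ r ih =>
    intro θ
    -- notation
    have hφlt : ∀ N, r ≤ N → ∀ k : Fin r, (k : ℕ) < N := fun N h k => lt_of_lt_of_le k.isLt h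
    -- the product over the first r factors
    have hf_meas : ∀ N, AEStronglyMeasurable
        (fun ω => ∏ k : Fin r, γ N (k : ℕ) ω (θ k.castSucc)) P :=
      fun N => hmeasP N r (fun k => (k : ℕ)) (fun k => θ k.castSucc)
    have hf_bd : ∀ N, r ≤ N → ∀ᵐ ω ∂P,
        |∏ k : Fin r, γ N (k : ℕ) ω (θ k.castSucc)| ≤ ∏ k : Fin r, C (θ k.castSucc) :=
      fun N h => hbdP N r (fun k => (k : ℕ)) (hφlt N h) (fun k => θ k.castSucc)
    have hf_int : ∀ N, r ≤ N → Integrable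
        (fun ω => ∏ k : Fin r, γ N (k : ℕ) ω (θ k.castSucc)) P :=
      fun N h => hintP N r (fun k => (k : ℕ)) (hφlt N h) (fun k => θ k.castSucc)
    -- snoc index function
    have hsnoc_lt : ∀ (N j : ℕ), j < N → r ≤ N →
        ∀ k : Fin (r + 1), (Fin.snoc (fun k : Fin r => (k : ℕ)) j : Fin (r+1) → ℕ) k < N := by
      intro N j hj hr k
      rcases Fin.eq_castSucc_or_eq_last k with ⟨k', rfl⟩ | rfl
      · simpa [Fin.snoc_castSucc] using lt_of_lt_of_le k'.isLt hr
      · simpa [Fin.snoc_last] using hj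
    have hsnoc_inj : ∀ j, r ≤ j →
        Function.Injective (Fin.snoc (fun k : Fin r => (k : ℕ)) j : Fin (r+1) → ℕ) := by
      intro j hj a b hab
      rcases Fin.eq_castSucc_or_eq_last a with ⟨a', rfl⟩ | rfl <;>
        rcases Fin.eq_castSucc_or_eq_last b with ⟨b', rfl⟩ | rfl
      · simp only [Fin.snoc_castSucc] at hab
        exact congrArg Fin.castSucc (Fin.val_injective hab)
      · simp only [Fin.snoc_castSucc, Fin.snoc_last] at hab
        exact absurd (hab ▸ hj) (not_le.2 a'.isLt)
      · simp only [Fin.snoc_castSucc, Fin.snoc_last] at hab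
        exact absurd (hab ▸ hj) (not_le.2 b'.isLt)
      · rfl
    -- splitting of the (r+1)-fold product with snoc index
    have hsplit : ∀ (N j : ℕ) (ω : Ω),
        (∏ k : Fin (r + 1), γ N ((Fin.snoc (fun k : Fin r => (k : ℕ)) j : Fin (r+1) → ℕ) k) ω (θ k)) =
          γ N j ω (θ (Fin.last r)) * ∏ k : Fin r, γ N (k : ℕ) ω (θ k.castSucc) := by
      intro N j ω
      rw [Fin.prod_univ_castSucc]
      simp only [Fin.snoc_castSucc, Fin.snoc_last]
      ring
    have hsplit0 : ∀ (N : ℕ) (ω : Ω),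
        (∏ k : Fin (r + 1), γ N (k : ℕ) ω (θ k)) =
          γ N r ω (θ (Fin.last r)) * ∏ k : Fin r, γ N (k : ℕ) ω (θ k.castSucc) := by
      intro N ω
      rw [Fin.prod_univ_castSucc]
      simp only [Fin.coe_castSucc, Fin.val_last]
      ring
    -- integrability and bound of a single term
    have hterm_int : ∀ N j, j < N → r ≤ N → Integrable
        (fun ω => γ N j ω (θ (Fin.last r)) * ∏ k : Fin r, γ N (k : ℕ) ω (θ k.castSucc)) P := by
      intro N j hj hr
      have h := hintP N (r + 1) (Fin.snoc (fun k : Fin r => (k : ℕ)) j)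
        (hsnoc_lt N j hj hr) θ
      refine h.congr (Eventually.of_forall fun ω => ?_)
      exact hsplit N j ω
    have hterm_bd : ∀ N j, j < N → r ≤ N → ∀ᵐ ω ∂P,
        |γ N j ω (θ (Fin.last r)) * ∏ k : Fin r, γ N (k : ℕ) ω (θ k.castSucc)| ≤
          C (θ (Fin.last r)) * ∏ k : Fin r, C (θ k.castSucc) := by
      intro N j hj hr
      filter_upwards [hC (θ (Fin.last r)) N j hj, hf_bd N hr] with ω h1 h2
      rw [abs_mul]
      exact mul_le_mul h1 h2 (abs_nonneg _) (hC0 _)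
    have hterm_intbd : ∀ N j, j < N → r ≤ N →
        |∫ ω, γ N j ω (θ (Fin.last r)) * ∏ k : Fin r, γ N (k : ℕ) ω (θ k.castSucc) ∂P| ≤
          C (θ (Fin.last r)) * ∏ k : Fin r, C (θ k.castSucc) := by
      intro N j hj hr
      have h := norm_integral_le_of_norm_le
        (f := fun ω => γ N j ω (θ (Fin.last r)) * ∏ k : Fin r, γ N (k : ℕ) ω (θ k.castSucc))
        (g := fun _ => C (θ (Fin.last r)) * ∏ k : Fin r, C (θ k.castSucc))
        (integrable_const _) (by simpa only [Real.norm_eq_abs] using hterm_bd N j hj hr)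
      simpa [Real.norm_eq_abs] using h
    -- exchangeability: for r ≤ j < N the term integral equals A N
    have hexchj : ∀ N j, r ≤ j → j < N →
        ∫ ω, γ N j ω (θ (Fin.last r)) * ∏ k : Fin r, γ N (k : ℕ) ω (θ k.castSucc) ∂P =
          ∫ ω, ∏ k : Fin (r + 1), γ N (k : ℕ) ω (θ k) ∂P := by
      intro N j hrj hjN
      have hr : r ≤ N := hrj.trans hjN.le
      have h := hexch N (r + 1) θ (Fin.snoc (fun k : Fin r => (k : ℕ)) j) (fun k => (k : ℕ))
        (hsnoc_inj j hrj) (fun a b hab => Fin.val_injective hab)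
        (hsnoc_lt N j hjN hr) (fun k => lt_of_lt_of_le k.isLt (Nat.succ_le_of_lt (lt_of_le_of_lt hrj hjN)))
      calc ∫ ω, γ N j ω (θ (Fin.last r)) * ∏ k : Fin r, γ N (k : ℕ) ω (θ k.castSucc) ∂P
          = ∫ ω, ∏ k : Fin (r + 1),
              γ N ((Fin.snoc (fun k : Fin r => (k : ℕ)) j : Fin (r+1) → ℕ) k) ω (θ k) ∂P := by
            exact integral_congr_ae (Eventually.of_forall fun ω => (hsplit N j ω).symm)
        _ = ∫ ω, ∏ k : Fin (r + 1), γ N (k : ℕ) ω (θ k) ∂P := h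
    -- evaluation of the empirical current
    have hev : ∀ N ω, ξN N ω (θ (Fin.last r)) =
        (N : ℝ)⁻¹ * ∑ j ∈ Finset.range N, γ N j ω (θ (Fin.last r)) := by
      intro N ω
      rw [hξN]
      simp [ContinuousLinearMap.sum_apply, smul_eq_mul]
    -- pointwise expansion of ξN * f
    have hexpand : ∀ N ω, ξN N ω (θ (Fin.last r)) * ∏ k : Fin r, γ N (k : ℕ) ω (θ k.castSucc) =
        (N : ℝ)⁻¹ * ∑ j ∈ Finset.range N,
          γ N j ω (θ (Fin.last r)) * ∏ k : Fin r, γ N (k : ℕ) ω (θ k.castSucc) := by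
      intro N ω
      rw [hev, mul_assoc, Finset.sum_mul]
    -- integrability of ξN * f
    have hxi_int : ∀ N, r ≤ N → Integrable
        (fun ω => ξN N ω (θ (Fin.last r)) * ∏ k : Fin r, γ N (k : ℕ) ω (θ k.castSucc)) P := by
      intro N hr
      have h : Integrable (fun ω => (N : ℝ)⁻¹ * ∑ j ∈ Finset.range N,
          γ N j ω (θ (Fin.last r)) * ∏ k : Fin r, γ N (k : ℕ) ω (θ k.castSucc)) P :=
        (integrable_finset_sum _ fun j hj =>
          hterm_int N j (Finset.mem_range.1 hj) hr).const_mul _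
      exact h.congr (Eventually.of_forall fun ω => (hexpand N ω).symm)
    -- I_N in terms of the term integrals
    have hI_sum : ∀ N, r ≤ N →
        ∫ ω, ξN N ω (θ (Fin.last r)) * ∏ k : Fin r, γ N (k : ℕ) ω (θ k.castSucc) ∂P =
          (N : ℝ)⁻¹ * ∑ j ∈ Finset.range N,
            ∫ ω, γ N j ω (θ (Fin.last r)) * ∏ k : Fin r, γ N (k : ℕ) ω (θ k.castSucc) ∂P := by
      intro N hr
      rw [integral_congr_ae (Eventually.of_forall fun ω => hexpand N ω)]
      rw [integral_const_mul, integral_finset_sum _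
        (fun j hj => hterm_int N j (Finset.mem_range.1 hj) hr)]
    -- key identity:  N * I N = S N + (N - r) * A N
    have hkey : ∀ N, r < N →
        (N : ℝ) * ∫ ω, ξN N ω (θ (Fin.last r)) * ∏ k : Fin r, γ N (k : ℕ) ω (θ k.castSucc) ∂P =
          (∑ j ∈ Finset.range r,
            ∫ ω, γ N j ω (θ (Fin.last r)) * ∏ k : Fin r, γ N (k : ℕ) ω (θ k.castSucc) ∂P) +
          ((N : ℝ) - r) * ∫ ω, ∏ k : Fin (r + 1), γ N (k : ℕ) ω (θ k) ∂P := by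
      intro N hrlt
      have hr : r ≤ N := hrlt.le
      have hN0 : (0 : ℝ) < N := by
        exact_mod_cast lt_of_le_of_lt (Nat.zero_le r) hrlt
      rw [hI_sum N hr, ← mul_assoc, mul_inv_cancel₀ (ne_of_gt hN0), one_mul]
      rw [← Finset.sum_range_add_sum_Ico _ hr]
      congr 1
      have : ∀ j ∈ Finset.Ico r N,
          ∫ ω, γ N j ω (θ (Fin.last r)) * ∏ k : Fin r, γ N (k : ℕ) ω (θ k.castSucc) ∂P =
            ∫ ω, ∏ k : Fin (r + 1), γ N (k : ℕ) ω (θ k) ∂P := by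
        intro j hj
        obtain ⟨h1, h2⟩ := Finset.mem_Ico.1 hj
        exact hexchj N j h1 h2
      rw [Finset.sum_congr rfl this, Finset.sum_const, Nat.card_Ico, nsmul_eq_mul]
      congr 1
      exact Nat.cast_sub hr
    -- limit of the error term E N
    have hE : Tendsto (fun N => ∫ ω, (ξN N ω (θ (Fin.last r)) - ξ (θ (Fin.last r))) *
        ∏ k : Fin r, γ N (k : ℕ) ω (θ k.castSucc) ∂P) atTop (nhds 0) := by
      apply squeeze_zero_norm' (a := fun N =>
        (∫ ω, |ξN N ω (θ (Fin.last r)) - ξ (θ (Fin.last r))| ∂P) * ∏ k : Fin r, C (θ k.castSucc))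
      · filter_upwards [eventually_ge_atTop r] with N hr
        have hdiff_int : Integrable
            (fun ω => |ξN N ω (θ (Fin.last r)) - ξ (θ (Fin.last r))|) P := by
          have h1 : Integrable (fun ω => ξN N ω (θ (Fin.last r))) P := by
            have : Integrable (fun ω => (N : ℝ)⁻¹ *
                ∑ j ∈ Finset.range N, γ N j ω (θ (Fin.last r))) P :=
              (integrable_finset_sum _ fun j hj =>
                Integrable.mono' (integrable_const (C (θ (Fin.last r))))
                  (hmeas N j (θ (Fin.last r)))
                  (by simpa [Real.norm_eq_abs] using
                    hC (θ (Fin.last r)) N j (Finset.mem_range.1 hj))).const_mul _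
            exact this.congr (Eventually.of_forall fun ω => (hev N ω).symm)
          exact (h1.sub (integrable_const _)).abs
        have hb : ∀ᵐ ω ∂P, ‖(ξN N ω (θ (Fin.last r)) - ξ (θ (Fin.last r))) *
            ∏ k : Fin r, γ N (k : ℕ) ω (θ k.castSucc)‖ ≤
              |ξN N ω (θ (Fin.last r)) - ξ (θ (Fin.last r))| * ∏ k : Fin r, C (θ k.castSucc) := by
          filter_upwards [hf_bd N hr] with ω hω
          rw [Real.norm_eq_abs, abs_mul]
          exact mul_le_mul_of_nonneg_left hω (abs_nonneg _)
        have h := norm_integral_le_of_norm_le (hdiff_int.mul_const _) hb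
        rw [Real.norm_eq_abs] at h
        rw [Real.norm_eq_abs]
        refine h.trans ?_
        rw [integral_mul_const]
      · have := (hconv (θ (Fin.last r))).mul_const (∏ k : Fin r, C (θ k.castSucc))
        simpa using this
    -- limit of I N
    have hIlim : Tendsto (fun N =>
        ∫ ω, ξN N ω (θ (Fin.last r)) * ∏ k : Fin r, γ N (k : ℕ) ω (θ k.castSucc) ∂P) atTop
        (nhds (ξ (θ (Fin.last r)) * ∏ k : Fin r, ξ (θ k.castSucc))) := by
      have h2 : Tendsto (fun N => ξ (θ (Fin.last r)) *
          ∫ ω, ∏ k : Fin r, γ N (k : ℕ) ω (θ k.castSucc) ∂P) atTop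
          (nhds (ξ (θ (Fin.last r)) * ∏ k : Fin r, ξ (θ k.castSucc))) :=
        (ih (fun k => θ k.castSucc)).const_mul _
      have h3 := hE.add h2
      rw [zero_add] at h3
      refine h3.congr' ?_
      filter_upwards [eventually_ge_atTop r] with N hr
      have h1 : Integrable (fun ω => ((ξN N ω) (θ (Fin.last r)) - ξ (θ (Fin.last r))) *
          ∏ k : Fin r, γ N (k : ℕ) ω (θ k.castSucc)) P := by
        have h := (hxi_int N hr).sub ((hf_int N hr).const_mul (ξ (θ (Fin.last r))))
        refine h.congr (Eventually.of_forall fun ω => ?_)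
        simp only [Pi.sub_apply]
        ring
      have h2 : Integrable (fun ω => ξ (θ (Fin.last r)) *
          ∏ k : Fin r, γ N (k : ℕ) ω (θ k.castSucc)) P := (hf_int N hr).const_mul _
      rw [← integral_const_mul, ← integral_add h1 h2]
      refine integral_congr_ae (Eventually.of_forall fun ω => ?_)
      ring
    -- limit of the ratio
    have hratio : Tendsto (fun N : ℕ => ((N : ℝ) - r)⁻¹ * N) atTop (nhds 1) := by
      have hsub : Tendsto (fun N : ℕ => (N : ℝ) - r) atTop atTop :=
        tendsto_atTop_add_const_right _ (-(r : ℝ)) tendsto_natCast_atTop_atTop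
      have hinv : Tendsto (fun N : ℕ => ((N : ℝ) - r)⁻¹) atTop (nhds 0) :=
        hsub.inv_tendsto_atTop
      have h : Tendsto (fun N : ℕ => 1 + ((N : ℝ) - r)⁻¹ * r) atTop (nhds 1) := by
        have h0 : Tendsto (fun _ : ℕ => (1 : ℝ)) atTop (nhds 1) := tendsto_const_nhds
        have := h0.add (hinv.mul_const (r : ℝ))
        simpa using this
      refine h.congr' ?_
      filter_upwards [eventually_ge_atTop (r + 1)] with N hN
      have hne : (N : ℝ) - r ≠ 0 := by
        have : (r : ℝ) < N := by exact_mod_cast Nat.lt_of_succ_le hN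
        linarith
      field_simp
      try ring
    have hinv0 : Tendsto (fun N : ℕ => ((N : ℝ) - r)⁻¹) atTop (nhds 0) :=
      (tendsto_atTop_add_const_right _ (-(r : ℝ)) tendsto_natCast_atTop_atTop).inv_tendsto_atTop
    -- limit of the boundary sum term
    have hSlim : Tendsto (fun N : ℕ => ((N : ℝ) - r)⁻¹ * ∑ j ∈ Finset.range r,
        ∫ ω, γ N j ω (θ (Fin.last r)) * ∏ k : Fin r, γ N (k : ℕ) ω (θ k.castSucc) ∂P) atTop
        (nhds 0) := by
      apply squeeze_zero_norm' (a := fun N : ℕ => ((N : ℝ) - r)⁻¹ *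
        (r * (C (θ (Fin.last r)) * ∏ k : Fin r, C (θ k.castSucc))))
      · filter_upwards [eventually_ge_atTop (r + 1)] with N hN
        have hrN : r ≤ N := le_of_lt (Nat.lt_of_succ_le hN)
        have hpos : (0 : ℝ) ≤ ((N : ℝ) - r)⁻¹ := by
          have h : (r : ℝ) < N := by exact_mod_cast Nat.lt_of_succ_le hN
          have : (0 : ℝ) < (N : ℝ) - r := by linarith
          exact (inv_nonneg).2 this.le
        rw [Real.norm_eq_abs, abs_mul, abs_of_nonneg hpos]
        refine mul_le_mul_of_nonneg_left ?_ hpos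
        calc |∑ j ∈ Finset.range r, ∫ ω, γ N j ω (θ (Fin.last r)) *
                ∏ k : Fin r, γ N (k : ℕ) ω (θ k.castSucc) ∂P|
            ≤ ∑ j ∈ Finset.range r, |∫ ω, γ N j ω (θ (Fin.last r)) *
                ∏ k : Fin r, γ N (k : ℕ) ω (θ k.castSucc) ∂P| :=
              Finset.abs_sum_le_sum_abs _ _
          _ ≤ ∑ _j ∈ Finset.range r, C (θ (Fin.last r)) * ∏ k : Fin r, C (θ k.castSucc) :=
              Finset.sum_le_sum fun j hj =>
                hterm_intbd N j (lt_of_lt_of_le (Finset.mem_range.1 hj) hrN) hrN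
          _ = r * (C (θ (Fin.last r)) * ∏ k : Fin r, C (θ k.castSucc)) := by
              rw [Finset.sum_const, Finset.card_range, nsmul_eq_mul]
      · simpa using hinv0.mul_const (r * (C (θ (Fin.last r)) * ∏ k : Fin r, C (θ k.castSucc)))
    -- assembling
    have hG : Tendsto (fun N : ℕ =>
        (((N : ℝ) - r)⁻¹ * N) *
          (∫ ω, ξN N ω (θ (Fin.last r)) * ∏ k : Fin r, γ N (k : ℕ) ω (θ k.castSucc) ∂P) -
        ((N : ℝ) - r)⁻¹ * ∑ j ∈ Finset.range r,
          ∫ ω, γ N j ω (θ (Fin.last r)) * ∏ k : Fin r, γ N (k : ℕ) ω (θ k.castSucc) ∂P) atTop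
        (nhds (ξ (θ (Fin.last r)) * ∏ k : Fin r, ξ (θ k.castSucc))) := by
      have := (hratio.mul hIlim).sub hSlim
      simpa using this
    have hgoal : (∏ k : Fin (r + 1), ξ (θ k)) =
        ξ (θ (Fin.last r)) * ∏ k : Fin r, ξ (θ k.castSucc) := by
      rw [Fin.prod_univ_castSucc]; ring
    rw [hgoal]
    refine hG.congr' ?_
    filter_upwards [eventually_ge_atTop (r + 1)] with N hN
    have hrN : r ≤ N := le_of_lt (Nat.lt_of_succ_le hN)
    have hne : (N : ℝ) - r ≠ 0 := by
      have : (r : ℝ) < N := by exact_mod_cast Nat.lt_of_succ_le hN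
      linarith
    have h := hkey N (Nat.lt_of_succ_le hN)
    have hcancel : ((N : ℝ) - r)⁻¹ * ((N : ℝ) - r) = 1 := inv_mul_cancel₀ hne
    linear_combination (((N : ℝ) - r)⁻¹) * h +
      (∫ ω, ∏ k : Fin (r + 1), γ N (k : ℕ) ω (θ k) ∂P) * hcancel
end
end
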